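/- In the group G with generators a_i, b_i, x_i (i ∈ I), c, y and defining relations R ∈ 𝓡 (words in the a_i), x_i c x_i^{-1} = c b_i, y b_i y^{-1} = b_i a_i, c^n = 1, x_i b_j = b_j x_i, a_i b_j = b_j a_i, a_i c = c a_i, y c = c y, every word W(𝓐) in the letters a_i^{±1} satisfies W(𝓐)^n = 1. -/

import Mathlib

/-- Generators of the group `G`: letters `a_i, b_i, x_i` for `i ∈ I`, and `c`, `y`. -/
inductive Gen (I : Type) where
  | a : I → Gen I
  | b : I → Gen I
  | x : I → Gen I
  | c : Gen I
  | y : Gen I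

open FreeGroup

/-- The defining relators of `G`: the relators `R ∈ 𝓡` (words in the `a_i`), together with
`x_i c x_i⁻¹ = c b_i`, `y b_i y⁻¹ = b_i a_i`, `c^n = 1`, `x_i b_j = b_j x_i`,
`a_i b_j = b_j a_i`, `a_i c = c a_i` and `y c = c y`. -/
def gRels (I : Type) (R : Set (FreeGroup I)) (n : ℕ) : Set (FreeGroup (Gen I)) :=
  (FreeGroup.map Gen.a '' R) ∪
  {w | ∃ i : I, w = of (Gen.x i) * of Gen.c * (of (Gen.x i))⁻¹ *
        (of Gen.c * of (Gen.b i))⁻¹} ∪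
  {w | ∃ i : I, w = of Gen.y * of (Gen.b i) * (of Gen.y)⁻¹ *
        (of (Gen.b i) * of (Gen.a i))⁻¹} ∪
  {of (Gen.c (I := I)) ^ n} ∪
  {w | ∃ i j : I, w = of (Gen.x i) * of (Gen.b j) * (of (Gen.b j) * of (Gen.x i))⁻¹} ∪
  {w | ∃ i j : I, w = of (Gen.a i) * of (Gen.b j) * (of (Gen.b j) * of (Gen.a i))⁻¹} ∪
  {w | ∃ i : I, w = of (Gen.a i) * of Gen.c * (of Gen.c * of (Gen.a i))⁻¹} ∪
  {of (Gen.y (I := I)) * of Gen.c * (of Gen.c * of Gen.y)⁻¹}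

/-- In the group `G` presented by the relations above, every word `W(𝓐)` in the letters
`a_i^{±1}` satisfies `W(𝓐)^n = 1`. -/
theorem pow_word_eq_one (I : Type) (R : Set (FreeGroup I)) (n : ℕ)
    (W : FreeGroup I) :
    (QuotientGroup.mk' (Subgroup.normalClosure (gRels I R n))
        (FreeGroup.map Gen.a W)) ^ n = 1 := by
  set N := Subgroup.normalClosure (gRels I R n) with hN
  set π := QuotientGroup.mk' N with hπ
  have hrel : ∀ r ∈ gRels I R n, π r = 1 := by
    intro r hr
    rw [hπ, QuotientGroup.mk'_apply, QuotientGroup.eq_one_iff]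
    exact Subgroup.subset_normalClosure hr
  set A := π.comp (FreeGroup.map Gen.a) with hA
  set B := π.comp (FreeGroup.map Gen.b) with hB
  set X := π.comp (FreeGroup.map Gen.x) with hX
  set cc := π (FreeGroup.of Gen.c) with hc
  set yy := π (FreeGroup.of Gen.y) with hy
  have heq : ∀ u v : FreeGroup (Gen I), π (u * v⁻¹) = 1 → π u = π v := by
    intro u v h
    rw [π.map_mul, π.map_inv, mul_inv_eq_one] at h
    exact h
  -- relation: x_i c x_i⁻¹ = c b_i
  have rxc : ∀ i, X (of i) * cc * (X (of i))⁻¹ = cc * B (of i) := by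
    intro i
    have h := heq _ _ (hrel _ (by
      simp only [gRels, Set.mem_union]
      exact Or.inl (Or.inl (Or.inl (Or.inl (Or.inl (Or.inl (Or.inr ⟨i, rfl⟩))))))))
    simpa [hX, hB, hc] using h
  -- relation: y b_i y⁻¹ = b_i a_i
  have ryb : ∀ i, yy * B (of i) * yy⁻¹ = B (of i) * A (of i) := by
    intro i
    have h := heq _ _ (hrel _ (by
      simp only [gRels, Set.mem_union]
      exact Or.inl (Or.inl (Or.inl (Or.inl (Or.inl (Or.inr ⟨i, rfl⟩)))))))
    simpa [hy, hB, hA] using h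
  -- relation c^n = 1
  have rcn : cc ^ n = 1 := by
    have h := hrel _ (show _ ∈ gRels I R n from by
      simp only [gRels, Set.mem_union]
      exact Or.inl (Or.inl (Or.inl (Or.inl (Or.inr rfl)))))
    simpa using h
  -- commutations at generator level
  have rxb : ∀ i j, Commute (X (of i)) (B (of j)) := by
    intro i j
    have h := heq _ _ (hrel _ (by
      simp only [gRels, Set.mem_union]
      exact Or.inl (Or.inl (Or.inl (Or.inr ⟨i, j, rfl⟩)))))
    simpa [Commute, SemiconjBy, hX, hB] using h
  have rab : ∀ i j, Commute (A (of i)) (B (of j)) := by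
    intro i j
    have h := heq _ _ (hrel _ (by
      simp only [gRels, Set.mem_union]
      exact Or.inl (Or.inl (Or.inr ⟨i, j, rfl⟩))))
    simpa [Commute, SemiconjBy, hA, hB] using h
  have rac : ∀ i, Commute (A (of i)) cc := by
    intro i
    have h := heq _ _ (hrel _ (by
      simp only [gRels, Set.mem_union]
      exact Or.inl (Or.inr ⟨i, rfl⟩)))
    simpa [Commute, SemiconjBy, hA, hc] using h
  have ryc : Commute yy cc := by
    have h := heq _ _ (hrel _ (by
      simp only [gRels, Set.mem_union]
      exact Or.inr rfl))
    simpa [Commute, SemiconjBy] using h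
  -- extend commutations to all words
  have extend : ∀ (F : FreeGroup I →* FreeGroup (Gen I) ⧸ N)
      (g : FreeGroup (Gen I) ⧸ N), (∀ i, Commute (F (of i)) g) →
      ∀ w, Commute (F w) g := by
    intro F g hg w
    induction w using FreeGroup.induction_on with
    | C1 => simpa using Commute.one_left g
    | of a => exact hg a
    | inv_of a h => rw [F.map_inv]; exact h.inv_left
    | mul u v hu hv => rw [F.map_mul]; exact hu.mul_left hv
  have hAB : ∀ w v, Commute (A w) (B v) := by
    intro w v
    refine extend A (B v) (fun i => ?_) w
    exact ((extend B (A (of i)) (fun j => (rab i j).symm) v)).symm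
  have hXB : ∀ w v, Commute (X w) (B v) := by
    intro w v
    refine extend X (B v) (fun i => ?_) w
    exact ((extend B (X (of i)) (fun j => (rxb i j).symm) v)).symm
  have hAc : ∀ w, Commute (A w) cc := extend A cc rac
  -- the map w ↦ B w * X w is a homomorphism, since B's and X's commute
  set BX : FreeGroup I →* FreeGroup (Gen I) ⧸ N :=
    MonoidHom.mk' (fun w => B w * X w) (by
      intro u v
      show B (u * v) * X (u * v) = B u * X u * (B v * X v)
      rw [B.map_mul, X.map_mul]
      calc B u * B v * (X u * X v) = B u * (B v * X u) * X v := by group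
        _ = B u * (X u * B v) * X v := by rw [(hXB u v).eq]
        _ = B u * X u * (B v * X v) := by group) with hBX
  -- the map w ↦ B w * A w is a homomorphism, since A's and B's commute
  set BA : FreeGroup I →* FreeGroup (Gen I) ⧸ N :=
    MonoidHom.mk' (fun w => B w * A w) (by
      intro u v
      show B (u * v) * A (u * v) = B u * A u * (B v * A v)
      rw [B.map_mul, A.map_mul]
      calc B u * B v * (A u * A v) = B u * (B v * A u) * A v := by group
        _ = B u * (A u * B v) * A v := by rw [← (hAB u v).eq]
        _ = B u * A u * (B v * A v) := by group) with hBA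
  -- conjugation of c by X w (via hom extension)
  have hXc0 : ((MulAut.conj cc⁻¹).toMonoidHom.comp X) = BX := by
    apply FreeGroup.ext_hom
    intro i
    show cc⁻¹ * X (of i) * cc⁻¹⁻¹ = B (of i) * X (of i)
    rw [inv_inv]
    have := rxc i
    calc cc⁻¹ * X (of i) * cc
        = cc⁻¹ * (X (of i) * cc * (X (of i))⁻¹) * (X (of i) * cc⁻¹ * cc) := by group
      _ = cc⁻¹ * (cc * B (of i)) * (X (of i) * cc⁻¹ * cc) := by rw [this]
      _ = B (of i) * X (of i) := by group
  have hXc : ∀ w, X w * cc * (X w)⁻¹ = cc * B w := by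
    intro w
    have h : cc⁻¹ * X w * cc = B w * X w := by
      have := DFunLike.congr_fun hXc0 w
      simpa [hBX] using this
    calc X w * cc * (X w)⁻¹ = cc * (cc⁻¹ * X w * cc) * cc⁻¹ * cc * (X w)⁻¹ := by group
      _ = cc * (B w * X w) * cc⁻¹ * cc * (X w)⁻¹ := by rw [h]
      _ = cc * B w := by group
  -- conjugation of B w by y (via hom extension)
  have hyB0 : ((MulAut.conj yy).toMonoidHom.comp B) = BA := by
    apply FreeGroup.ext_hom
    intro i
    show yy * B (of i) * yy⁻¹ = B (of i) * A (of i)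
    exact ryb i
  have hyB : ∀ w, yy * B w * yy⁻¹ = B w * A w := by
    intro w
    have := DFunLike.congr_fun hyB0 w
    simpa [hBA] using this
  -- main computation
  have key1 : (cc * B W) ^ n = 1 := by
    have h1 : (X W * cc * (X W)⁻¹) ^ n = 1 := by
      rw [conj_pow, rcn, mul_one, mul_inv_cancel]
    rw [← hXc W]
    exact h1
  have key2 : (cc * B W * A W) ^ n = 1 := by
    have h2 : yy * (cc * B W) * yy⁻¹ = cc * B W * A W := by
      calc yy * (cc * B W) * yy⁻¹ = (yy * cc) * B W * yy⁻¹ := by group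
        _ = (cc * yy) * B W * yy⁻¹ := by rw [ryc.eq]
        _ = cc * (yy * B W * yy⁻¹) := by group
        _ = cc * (B W * A W) := by rw [hyB]
        _ = cc * B W * A W := by group
    rw [← h2, conj_pow, key1, mul_one, mul_inv_cancel]
  have hcomm : Commute (cc * B W) (A W) :=
    Commute.mul_left (hAc W).symm (hAB W W).symm
  have hmp := hcomm.mul_pow n
  rw [key2, key1, one_mul] at hmp
  show A W ^ n = 1
  exact hmp.symm
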